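/- Let M_src and M_tar be MDPs with shared reward |r| ≤ r_max, differing only in dynamics. For the one-step Bellman optimality recursion, the difference of horizon-(h−1) optimal values satisfies: max_s [V*_{src,h−1}(s) − V*_{tar,h−1}(s)] ≤ (2 r_max / (1−γ)) · sup_{s,a} D_TV(P_src(·|s,a), P_tar(·|s,a)) + γ · max_{s'} [V*_{src,h}(s') − V*_{tar,h}(s')], where V*_{·,h} are finite-horizon optimal value functions with |V*| ≤ r_max/(1−γ). -/

import Mathlib

noncomputable def Dtv {S : Type} [Fintype S] (p q : S → ℝ) : ℝ :=
  (1 / 2) * ∑ s', |p s' - q s'|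

/-- One-step recursion for finite-horizon optimal value differences under dynamics
shift: the horizon-(h-1) gap is bounded by a per-step TV term plus γ times the
horizon-h gap. `Vsrc0, Vtar0` are the horizon-(h-1) values and `Vsrc1, Vtar1` the
horizon-h values. -/
theorem stmt_3
    {S A : Type} [Fintype S] [Fintype A] [Nonempty S] [Nonempty A]
    (Psrc Ptar : S → A → S → ℝ)
    (hPsrc : ∀ s a, (∀ s', 0 ≤ Psrc s a s') ∧ ∑ s', Psrc s a s' = 1)
    (hPtar : ∀ s a, (∀ s', 0 ≤ Ptar s a s') ∧ ∑ s', Ptar s a s' = 1)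
    (r : S → A → ℝ) (rmax : ℝ) (hr : ∀ s a, |r s a| ≤ rmax)
    (γ : ℝ) (hγ0 : 0 ≤ γ) (hγ1 : γ < 1)
    (Vsrc0 Vsrc1 Vtar0 Vtar1 : S → ℝ)
    -- finite-horizon Bellman optimality recursions
    (hVsrc : ∀ s, Vsrc0 s = ⨆ a : A, ∑ s', Psrc s a s' * (r s a + γ * Vsrc1 s'))
    (hVtar : ∀ s, Vtar0 s = ⨆ a : A, ∑ s', Ptar s a s' * (r s a + γ * Vtar1 s'))
    -- boundedness of the finite-horizon optimal values
    (hBsrc : ∀ s, |Vsrc1 s| ≤ rmax / (1 - γ))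
    (hBtar : ∀ s, |Vtar1 s| ≤ rmax / (1 - γ)) :
    (⨆ s : S, (Vsrc0 s - Vtar0 s)) ≤
      (2 * rmax / (1 - γ)) * (⨆ p : S × A, Dtv (Psrc p.1 p.2) (Ptar p.1 p.2)) +
        γ * ⨆ s' : S, (Vsrc1 s' - Vtar1 s') := by
  have h1γ : 0 < 1 - γ := by linarith
  have hrm : 0 ≤ rmax := le_trans (abs_nonneg _)
    (hr (Classical.arbitrary S) (Classical.arbitrary A))
  set C := rmax / (1 - γ) with hC
  have hC0 : 0 ≤ C := div_nonneg hrm h1γ.le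
  have hCeq : rmax + γ * C = C := by
    rw [hC]
    field_simp
    ring
  -- bounded above facts for the sups
  have bddV : BddAbove (Set.range fun s' : S => Vsrc1 s' - Vtar1 s') :=
    (Set.finite_range _).bddAbove
  have bddD : BddAbove (Set.range fun p : S × A => Dtv (Psrc p.1 p.2) (Ptar p.1 p.2)) :=
    (Set.finite_range _).bddAbove
  set T := (2 * rmax / (1 - γ)) * (⨆ p : S × A, Dtv (Psrc p.1 p.2) (Ptar p.1 p.2)) +
        γ * ⨆ s' : S, (Vsrc1 s' - Vtar1 s') with hT
  apply ciSup_le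
  intro s
  rw [hVsrc s, hVtar s, sub_le_iff_le_add]
  apply ciSup_le
  intro a
  have key : (∑ s', Psrc s a s' * (r s a + γ * Vsrc1 s')) -
      (∑ s', Ptar s a s' * (r s a + γ * Vtar1 s')) ≤ T := by
    have hsplit : (∑ s', Psrc s a s' * (r s a + γ * Vsrc1 s')) -
        (∑ s', Ptar s a s' * (r s a + γ * Vtar1 s')) =
        (∑ s', (Psrc s a s' - Ptar s a s') * (r s a + γ * Vsrc1 s')) +
        (∑ s', Ptar s a s' * (γ * (Vsrc1 s' - Vtar1 s'))) := by
      rw [← Finset.sum_add_distrib, ← Finset.sum_sub_distrib]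
      congr 1; ext s'; ring
    rw [hsplit, hT]
    have hb1 : (∑ s', (Psrc s a s' - Ptar s a s') * (r s a + γ * Vsrc1 s')) ≤
        (2 * rmax / (1 - γ)) * (⨆ p : S × A, Dtv (Psrc p.1 p.2) (Ptar p.1 p.2)) := by
      have h1 : (∑ s', (Psrc s a s' - Ptar s a s') * (r s a + γ * Vsrc1 s')) ≤
          ∑ s', |Psrc s a s' - Ptar s a s'| * C := by
        apply Finset.sum_le_sum
        intro s' _
        calc (Psrc s a s' - Ptar s a s') * (r s a + γ * Vsrc1 s')
            ≤ |(Psrc s a s' - Ptar s a s') * (r s a + γ * Vsrc1 s')| := le_abs_self _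
          _ = |Psrc s a s' - Ptar s a s'| * |r s a + γ * Vsrc1 s'| := abs_mul _ _
          _ ≤ |Psrc s a s' - Ptar s a s'| * C := by
              apply mul_le_mul_of_nonneg_left _ (abs_nonneg _)
              calc |r s a + γ * Vsrc1 s'| ≤ |r s a| + |γ * Vsrc1 s'| := abs_add_le _ _
                _ ≤ rmax + γ * C := by
                    have := hBsrc s'
                    rw [abs_mul, abs_of_nonneg hγ0]
                    exact add_le_add (hr s a) (by nlinarith [hBsrc s'])
                _ = C := hCeq
      have h2 : (∑ s', |Psrc s a s' - Ptar s a s'| * C) =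
          (2 * rmax / (1 - γ)) * Dtv (Psrc s a) (Ptar s a) := by
        rw [← Finset.sum_mul, Dtv, hC]
        ring
      have h3 : Dtv (Psrc s a) (Ptar s a) ≤
          ⨆ p : S × A, Dtv (Psrc p.1 p.2) (Ptar p.1 p.2) :=
        le_ciSup bddD (s, a)
      calc (∑ s', (Psrc s a s' - Ptar s a s') * (r s a + γ * Vsrc1 s'))
          ≤ (2 * rmax / (1 - γ)) * Dtv (Psrc s a) (Ptar s a) := by rw [← h2]; exact h1
        _ ≤ (2 * rmax / (1 - γ)) * (⨆ p : S × A, Dtv (Psrc p.1 p.2) (Ptar p.1 p.2)) := by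
            apply mul_le_mul_of_nonneg_left h3
            positivity
    have hb2 : (∑ s', Ptar s a s' * (γ * (Vsrc1 s' - Vtar1 s'))) ≤
        γ * ⨆ s' : S, (Vsrc1 s' - Vtar1 s') := by
      calc (∑ s', Ptar s a s' * (γ * (Vsrc1 s' - Vtar1 s')))
          ≤ ∑ s', Ptar s a s' * (γ * ⨆ t : S, (Vsrc1 t - Vtar1 t)) := by
            apply Finset.sum_le_sum
            intro s' _
            apply mul_le_mul_of_nonneg_left _ ((hPtar s a).1 s')
            exact mul_le_mul_of_nonneg_left (le_ciSup bddV s') hγ0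
        _ = (γ * ⨆ t : S, (Vsrc1 t - Vtar1 t)) := by
            rw [← Finset.sum_mul, (hPtar s a).2, one_mul]
    linarith
  have hle' : (∑ s', Ptar s a s' * (r s a + γ * Vtar1 s')) ≤
      ⨆ b : A, ∑ s', Ptar s b s' * (r s b + γ * Vtar1 s') :=
    le_ciSup (f := fun b => ∑ s', Ptar s b s' * (r s b + γ * Vtar1 s'))
      (Set.finite_range _).bddAbove a
  linarith
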